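/- Let A be a finite type and n ≥ 3. Then the group of alternating conservative permutations of (Fin n → A) equals the subgroup of Perm(Fin n → A) generated by the 3-cycles (x y z) of triples of pairwise distinct words x, y, z : Fin n → A that agree on all coordinates outside some 3-element subset S of Fin n and whose restrictions to S have equal multisets of entries. -/

import Mathlib

/-- The weight of a word `x : Fin n → A` is the multiset of its entries. -/
def wordWeight {A : Type*} {n : ℕ} (x : Fin n → A) : Multiset A :=
  Multiset.map x Finset.univ.val

/-- A permutation of words is *alternating conservative* if it preserves the weight of
every word and its restriction to each weight class is an even permutation. -/
def IsAltConservative {A : Type*} [Fintype A] [DecidableEq A] {n : ℕ}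
    (f : Equiv.Perm (Fin n → A)) : Prop :=
  (∀ x : Fin n → A, wordWeight (f x) = wordWeight x) ∧
  ∀ (c : Multiset A)
    (h : ∀ x : Fin n → A, wordWeight x = c ↔ wordWeight (f x) = c),
    Equiv.Perm.sign (f.subtypePerm (p := fun x => wordWeight x = c) (fun x => (h x).symm)) = 1

set_option linter.unusedSectionVars false

namespace AltConsProof

variable {A : Type*} [Fintype A] [DecidableEq A] {n : ℕ}

def gens (A : Type*) [Fintype A] [DecidableEq A] (n : ℕ) : Set (Equiv.Perm (Fin n → A)) :=
  {σ : Equiv.Perm (Fin n → A) |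
    ∃ (S : Finset (Fin n)) (x y z : Fin n → A),
      S.card = 3 ∧ x ≠ y ∧ x ≠ z ∧ y ≠ z ∧
      (∀ i ∉ S, x i = y i) ∧ (∀ i ∉ S, x i = z i) ∧
      Multiset.map x S.val = Multiset.map y S.val ∧
      Multiset.map x S.val = Multiset.map z S.val ∧
      σ = Equiv.swap x z * Equiv.swap x y}

lemma weight_decomp (x : Fin n → A) (S : Finset (Fin n)) :
    wordWeight x = Multiset.map x S.val + Multiset.map x Sᶜ.val := by
  have h : (S.disjUnion Sᶜ disjoint_compl_right) = Finset.univ := by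
    rw [Finset.disjUnion_eq_union, Finset.union_compl]
  have h2 : (Finset.univ : Finset (Fin n)).val = S.val + Sᶜ.val := by
    rw [← h]; rfl
  rw [wordWeight, h2, Multiset.map_add]

lemma weight_eq_of_eq_off {x y : Fin n → A} {S : Finset (Fin n)}
    (hoff : ∀ i ∉ S, x i = y i) (hS : Multiset.map x S.val = Multiset.map y S.val) :
    wordWeight x = wordWeight y := by
  rw [weight_decomp x S, weight_decomp y S, hS]
  congr 1
  exact Multiset.map_congr rfl
    (fun i hi => hoff i (Finset.mem_compl.mp (Finset.mem_val.mp hi)))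

lemma map_eq_on_of_weight_eq {x y : Fin n → A} {S : Finset (Fin n)}
    (hw : wordWeight x = wordWeight y) (hoff : ∀ i ∉ S, x i = y i) :
    Multiset.map x S.val = Multiset.map y S.val := by
  have hc : Multiset.map x Sᶜ.val = Multiset.map y Sᶜ.val :=
    Multiset.map_congr rfl
      (fun i hi => hoff i (Finset.mem_compl.mp (Finset.mem_val.mp hi)))
  have h2 := hw
  rw [weight_decomp x S, weight_decomp y S, hc] at h2
  exact add_right_cancel h2

def Dset (x y : Fin n → A) : Finset (Fin n) :=
  Finset.filter (fun i => x i ≠ y i) Finset.univ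

lemma mem_Dset {x y : Fin n → A} {i : Fin n} : i ∈ Dset x y ↔ x i ≠ y i := by
  simp [Dset]

lemma Dset_comm (x y : Fin n → A) : Dset x y = Dset y x := by
  ext i; simp [Dset, ne_comm]

lemma eq_off_Dset {x y : Fin n → A} : ∀ i ∉ Dset x y, x i = y i := by
  intro i hi
  by_contra h
  exact hi (mem_Dset.mpr h)

lemma map_Dset_eq {x y : Fin n → A} (hw : wordWeight x = wordWeight y) :
    Multiset.map x (Dset x y).val = Multiset.map y (Dset x y).val :=
  map_eq_on_of_weight_eq hw eq_off_Dset

lemma weight_comp_perm (x : Fin n → A) (e : Equiv.Perm (Fin n)) :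
    wordWeight (x ∘ ⇑e) = wordWeight x := by
  have h : (Finset.univ : Finset (Fin n)).val.map ⇑e = (Finset.univ : Finset (Fin n)).val := by
    have h2 := Finset.map_univ_equiv (e : Fin n ≃ Fin n)
    calc (Finset.univ : Finset (Fin n)).val.map ⇑e
        = (Finset.univ.map (e : Fin n ≃ Fin n).toEmbedding).val := rfl
      _ = (Finset.univ : Finset (Fin n)).val := by rw [h2]
  calc wordWeight (x ∘ ⇑e) = Multiset.map x ((Finset.univ : Finset (Fin n)).val.map ⇑e) := by
        rw [wordWeight, Multiset.map_map]
    _ = wordWeight x := by rw [h]; rfl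

lemma gen_mem (hn : 3 ≤ n) {x y z : Fin n → A} {T : Finset (Fin n)}
    (hxy : x ≠ y) (hxz : x ≠ z) (hyz : y ≠ z)
    (hwy : wordWeight x = wordWeight y) (hwz : wordWeight x = wordWeight z)
    (hTy : Dset x y ⊆ T) (hTz : Dset x z ⊆ T) (hT : T.card ≤ 3) :
    Equiv.swap x z * Equiv.swap x y ∈ Subgroup.closure (gens A n) := by
  obtain ⟨S, hTS, hScard⟩ := Finset.exists_superset_card_eq hT
    (by rw [Fintype.card_fin]; exact hn)
  apply Subgroup.subset_closure
  have hoffy : ∀ i ∉ S, x i = y i := fun i hi =>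
    eq_off_Dset i (fun hmem => hi (hTS (hTy hmem)))
  have hoffz : ∀ i ∉ S, x i = z i := fun i hi =>
    eq_off_Dset i (fun hmem => hi (hTS (hTz hmem)))
  exact ⟨S, x, y, z, hScard, hxy, hxz, hyz, hoffy, hoffz,
    map_eq_on_of_weight_eq hwy hoffy, map_eq_on_of_weight_eq hwz hoffz, rfl⟩

lemma rot {β : Type*} [DecidableEq β] {u v w : β} (huv : u ≠ v) (huw : u ≠ w) (hvw : v ≠ w) :
    Equiv.swap u w * Equiv.swap u v = Equiv.swap v u * Equiv.swap v w := by
  ext a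
  simp only [Equiv.Perm.mul_apply, Equiv.swap_apply_def]
  split_ifs <;> simp_all

lemma telescope {β : Type*} [DecidableEq β] (u v w t : β) :
    Equiv.swap u w * Equiv.swap u v =
      (Equiv.swap u w * Equiv.swap u t) * (Equiv.swap u t * Equiv.swap u v) := by
  rw [mul_assoc, ← mul_assoc (Equiv.swap u t), Equiv.swap_mul_self, one_mul]

lemma move {u w : Fin n → A} (hw : wordWeight u = wordWeight w) {i₀ : Fin n}
    (hi : u i₀ ≠ w i₀) :
    ∃ j₀, j₀ ≠ i₀ ∧ w j₀ = u i₀ ∧ u j₀ ≠ w j₀ := by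
  have h1 : u i₀ ∈ Multiset.map u (Dset u w).val :=
    Multiset.mem_map_of_mem u (Finset.mem_val.mpr (mem_Dset.mpr hi))
  rw [map_Dset_eq hw] at h1
  obtain ⟨j₀, hj₀D, hj₀⟩ := Multiset.mem_map.mp h1
  refine ⟨j₀, ?_, hj₀, mem_Dset.mp (Finset.mem_val.mp hj₀D)⟩
  rintro rfl
  exact hi hj₀.symm

lemma big_escape {D : Finset (Fin n)} (h3 : 3 ≤ D.card) (i j : Fin n) :
    ∃ m ∈ D, m ≠ i ∧ m ≠ j := by
  have hns : ¬ D ⊆ {i, j} := by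
    intro hsub
    have h1 := Finset.card_le_card hsub
    have h2 : ({i, j} : Finset (Fin n)).card ≤ 2 :=
      (Finset.card_insert_le _ _).trans (by simp)
    omega
  obtain ⟨m, hm, hm2⟩ := Finset.not_subset.mp hns
  refine ⟨m, hm, ?_⟩
  simpa using hm2

lemma M2 (hn : 3 ≤ n) : ∀ N : ℕ, ∀ u v w : Fin n → A, ∀ i j : Fin n,
    (Dset u w).card ≤ N → i ≠ j → u i ≠ u j → v = u ∘ ⇑(Equiv.swap i j) →
    wordWeight u = wordWeight w → u ≠ w → v ≠ w →
    Equiv.swap u w * Equiv.swap u v ∈ Subgroup.closure (gens A n) := by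
  intro N
  induction N using Nat.strong_induction_on with
  | _ N ih =>
  intro u v w i j hN hij huij hv hw huw hvw
  have hvi : v i = u j := by rw [hv]; simp
  have hvj : v j = u i := by rw [hv]; simp
  have hvk : ∀ k, k ≠ i → k ≠ j → v k = u k := by
    intro k h1 h2
    rw [hv]
    simp [Function.comp_apply, Equiv.swap_apply_of_ne_of_ne h1 h2]
  have hwv : wordWeight u = wordWeight v := by rw [hv]; exact (weight_comp_perm u _).symm
  have huv : u ≠ v := fun h => huij ((congrFun h i).trans hvi)
  have hDuv : Dset u v ⊆ {i, j} := by
    intro a ha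
    rw [mem_Dset] at ha
    rw [Finset.mem_insert, Finset.mem_singleton]
    by_contra hc
    push_neg at hc
    exact ha (hvk a hc.1 hc.2).symm
  have hDuv2 : (Dset u v).card ≤ 2 := by
    have h1 := Finset.card_le_card hDuv
    have h2 : ({i, j} : Finset (Fin n)).card ≤ 2 :=
      (Finset.card_insert_le _ _).trans (by simp)
    omega
  by_cases hA : (insert i (insert j (Dset u w))).card ≤ 3
  · refine gen_mem hn huv huw hvw hwv hw
      (hDuv.trans ?_) (fun a ha => by simp [ha]) hA
    intro a ha
    simp only [Finset.mem_insert, Finset.mem_singleton] at ha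
    simp only [Finset.mem_insert]
    tauto
  push_neg at hA
  have hD2 : 2 ≤ (Dset u w).card := by
    have h1 := Finset.card_insert_le i (insert j (Dset u w))
    have h2 := Finset.card_insert_le j (Dset u w)
    omega
  by_cases hD : (Dset u w).card ≤ 2
  · -- Hamming distance between u and w is exactly 2
    have hDc : (Dset u w).card = 2 := le_antisymm hD hD2
    obtain ⟨k, l, hkl, hDkl⟩ := Finset.card_eq_two.mp hDc
    have hk : u k ≠ w k := mem_Dset.mp (by rw [hDkl]; simp)
    have hl : u l ≠ w l := mem_Dset.mp (by rw [hDkl]; simp)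
    have hukwl : u k = w l := by
      have h1 : u k ∈ Multiset.map u (Dset u w).val :=
        Multiset.mem_map_of_mem u (Finset.mem_val.mpr (by rw [hDkl]; simp))
      rw [map_Dset_eq hw] at h1
      obtain ⟨m, hmD, hm⟩ := Multiset.mem_map.mp h1
      have hmkl : m = k ∨ m = l := by
        have := Finset.mem_val.mp hmD
        rw [hDkl] at this
        simpa using this
      rcases hmkl with rfl | rfl
      · exact absurd hm.symm hk
      · exact hm.symm
    have hulwk : u l = w k := by
      have h1 : u l ∈ Multiset.map u (Dset u w).val :=
        Multiset.mem_map_of_mem u (Finset.mem_val.mpr (by rw [hDkl]; simp))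
      rw [map_Dset_eq hw] at h1
      obtain ⟨m, hmD, hm⟩ := Multiset.mem_map.mp h1
      have hmkl : m = k ∨ m = l := by
        have := Finset.mem_val.mp hmD
        rw [hDkl] at this
        simpa using this
      rcases hmkl with rfl | rfl
      · exact hm.symm
      · exact absurd hm.symm hl
    have hukul : u k ≠ u l := fun h => hl (h.symm.trans hukwl)
    rw [hDkl] at hA
    have hinotin : i ∉ ({k, l} : Finset (Fin n)) := by
      intro hmem
      have hsub : insert i (insert j ({k, l} : Finset (Fin n))) = insert j {k, l} := by
        rw [Finset.insert_comm, Finset.insert_eq_self.mpr hmem]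
      rw [hsub] at hA
      have h1 := Finset.card_insert_le j ({k, l} : Finset (Fin n))
      have h2 : ({k, l} : Finset (Fin n)).card ≤ 2 :=
        (Finset.card_insert_le _ _).trans (by simp)
      omega
    have hjnotin : j ∉ ({k, l} : Finset (Fin n)) := by
      intro hmem
      rw [Finset.insert_eq_self.mpr hmem] at hA
      have h1 := Finset.card_insert_le i ({k, l} : Finset (Fin n))
      have h2 : ({k, l} : Finset (Fin n)).card ≤ 2 :=
        (Finset.card_insert_le _ _).trans (by simp)
      omega
    have hik : i ≠ k := fun h => hinotin (by simp [h])
    have hil : i ≠ l := fun h => hinotin (by simp [h])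
    have hjk : j ≠ k := fun h => hjnotin (by simp [h])
    have hjl : j ≠ l := fun h => hjnotin (by simp [h])
    obtain ⟨b, hb, hib⟩ : ∃ b, (b = k ∨ b = l) ∧ u i ≠ u b := by
      by_cases h : u i = u k
      · exact ⟨l, Or.inr rfl, fun hh => hukul (h.symm.trans hh)⟩
      · exact ⟨k, Or.inl rfl, h⟩
    have hbi : b ≠ i := by rcases hb with rfl | rfl; exacts [hik.symm, hil.symm]
    have hbj : b ≠ j := by rcases hb with rfl | rfl; exacts [hjk.symm, hjl.symm]
    set t := u ∘ ⇑(Equiv.swap i b) with ht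
    have hti : t i = u b := by simp [ht]
    have htb : t b = u i := by simp [ht]
    have htk : ∀ a, a ≠ i → a ≠ b → t a = u a := fun a h1 h2 => by
      simp [ht, Function.comp_apply, Equiv.swap_apply_of_ne_of_ne h1 h2]
    have hwt : wordWeight u = wordWeight t := (weight_comp_perm u _).symm
    have hut : u ≠ t := fun h => hib ((congrFun h i).trans hti)
    have hvt : v ≠ t := by
      intro h
      have h1 : v b = u b := hvk b hbi hbj
      rw [h, htb] at h1
      exact hib h1
    have htw : t ≠ w := by
      intro h
      have h1 : u i = w i := eq_off_Dset i (by rw [hDkl]; simp [hik, hil])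
      have h2 : t i = u b := hti
      rw [h] at h2
      exact hib (h1.trans h2)
    have hDut : Dset u t ⊆ {i, b} := by
      intro a ha
      rw [mem_Dset] at ha
      rw [Finset.mem_insert, Finset.mem_singleton]
      by_contra hc
      push_neg at hc
      exact ha (htk a hc.1 hc.2).symm
    rw [telescope u v w t]
    refine mul_mem ?_ ?_
    · refine gen_mem (T := insert i {k, l}) hn hut huw htw hwt hw (hDut.trans ?_) ?_ ?_
      · intro a ha
        simp only [Finset.mem_insert, Finset.mem_singleton] at ha
        simp only [Finset.mem_insert, Finset.mem_singleton]
        rcases ha with rfl | rfl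
        · exact Or.inl rfl
        · exact Or.inr hb
      · rw [hDkl]
        exact Finset.subset_insert _ _
      · have h2 : ({k, l} : Finset (Fin n)).card ≤ 2 :=
          (Finset.card_insert_le _ _).trans (by simp)
        have h1 := Finset.card_insert_le i ({k, l} : Finset (Fin n))
        omega
    · refine gen_mem (T := insert b {i, j}) hn huv hut hvt hwv hwt (hDuv.trans ?_) (hDut.trans ?_) ?_
      · exact Finset.subset_insert _ _
      · intro a ha
        simp only [Finset.mem_insert, Finset.mem_singleton] at ha
        simp only [Finset.mem_insert, Finset.mem_singleton]
        tauto
      · have h2 : ({i, j} : Finset (Fin n)).card ≤ 2 :=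
          (Finset.card_insert_le _ _).trans (by simp)
        have h1 := Finset.card_insert_le b ({i, j} : Finset (Fin n))
        omega
  · -- Hamming distance at least 3 : move w one step closer to u
    have hD3 : 3 ≤ (Dset u w).card := by omega
    obtain ⟨i₀, hi₀⟩ := Finset.card_pos.mp (by omega : 0 < (Dset u w).card)
    have hi₀' : u i₀ ≠ w i₀ := mem_Dset.mp hi₀
    obtain ⟨j₀, hj₀i₀, hwj₀, huj₀⟩ := move hw hi₀'
    set w' := w ∘ ⇑(Equiv.swap i₀ j₀) with hw'def
    have hw'i₀ : w' i₀ = w j₀ := by simp [hw'def]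
    have hw'j₀ : w' j₀ = w i₀ := by simp [hw'def]
    have hw'k : ∀ a, a ≠ i₀ → a ≠ j₀ → w' a = w a := fun a h1 h2 => by
      simp [hw'def, Function.comp_apply, Equiv.swap_apply_of_ne_of_ne h1 h2]
    have hwi₀j₀ : w i₀ ≠ w j₀ := fun h => hi₀' (h.trans hwj₀).symm
    have hww' : wordWeight w' = wordWeight w := weight_comp_perm w _
    have hDsub : Dset u w' ⊆ (Dset u w).erase i₀ := by
      intro a ha
      rw [mem_Dset] at ha
      rcases eq_or_ne a i₀ with rfl | hai
      · exact absurd (hw'i₀.trans hwj₀).symm ha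
      rw [Finset.mem_erase, mem_Dset]
      refine ⟨hai, ?_⟩
      rcases eq_or_ne a j₀ with rfl | haj
      · exact huj₀
      · rw [← hw'k a hai haj]; exact ha
    have hDcard : (Dset u w').card ≤ N - 1 := by
      have h1 := Finset.card_le_card hDsub
      have h2 := Finset.card_erase_of_mem hi₀
      omega
    have huw' : u ≠ w' := by
      obtain ⟨m, hm, hmi, hmj⟩ := big_escape hD3 i₀ j₀
      intro h
      have h1 := hw'k m hmi hmj
      rw [← h] at h1
      exact (mem_Dset.mp hm) h1
    have hw'ne : w' ≠ w := fun h => hwi₀j₀ ((congrFun h i₀).symm.trans hw'i₀)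
    have hNge : 3 ≤ N := le_trans hD3 hN
    by_cases hvw' : v = w'
    · have hwvdef : w = v ∘ ⇑(Equiv.swap i₀ j₀) := by
        rw [hvw', hw'def]
        funext a
        simp [Function.comp_apply, Equiv.swap_apply_self]
      have hv12 : v i₀ ≠ v j₀ := by
        rw [hvw', hw'i₀, hw'j₀]
        exact hwi₀j₀.symm
      have hDvu : (Dset v u).card ≤ 2 := by rw [Dset_comm]; exact hDuv2
      have hrec := ih 2 (by omega) v w u i₀ j₀ hDvu (Ne.symm hj₀i₀) hv12 hwvdef
        hwv.symm (Ne.symm huv) (Ne.symm huw)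
      rw [rot huv huw hvw]
      exact hrec
    · have hrec1 := ih (N - 1) (by omega) u v w' i j hDcard hij huij hv
        (hw.trans hww'.symm) huw' hvw'
      have hwdef2 : w = w' ∘ ⇑(Equiv.swap i₀ j₀) := by
        rw [hw'def]
        funext a
        simp [Function.comp_apply, Equiv.swap_apply_self]
      have hw'12 : w' i₀ ≠ w' j₀ := by
        rw [hw'i₀, hw'j₀]
        exact hwi₀j₀.symm
      have hDw'u : (Dset w' u).card ≤ N - 1 := by rw [Dset_comm]; exact hDcard
      have hrec2 := ih (N - 1) (by omega) w' w u i₀ j₀ hDw'u (Ne.symm hj₀i₀) hw'12 hwdef2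
        (hww'.trans hw.symm) (Ne.symm huw') (Ne.symm huw)
      rw [telescope u v w w']
      refine mul_mem ?_ hrec1
      rw [rot huw' huw hw'ne]
      exact hrec2

lemma M3 (hn : 3 ≤ n) : ∀ N : ℕ, ∀ u v w : Fin n → A,
    (Dset u v).card ≤ N →
    wordWeight u = wordWeight v → wordWeight u = wordWeight w →
    u ≠ v → u ≠ w → v ≠ w →
    Equiv.swap u w * Equiv.swap u v ∈ Subgroup.closure (gens A n) := by
  intro N
  induction N using Nat.strong_induction_on with
  | _ N ih =>
  intro u v w hN hwv hww huv huw hvw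
  by_cases h2 : (Dset u v).card ≤ 2
  · -- extract the swap structure of the pair (u, v)
    have hne : (Dset u v).Nonempty := by
      obtain ⟨i, hi⟩ := Function.ne_iff.mp huv
      exact ⟨i, mem_Dset.mpr hi⟩
    have hone : (Dset u v).card ≠ 1 := by
      intro h1
      obtain ⟨i, hDi⟩ := Finset.card_eq_one.mp h1
      have hiD : i ∈ Dset u v := by rw [hDi]; simp
      have hmap := map_Dset_eq hwv
      rw [hDi] at hmap
      simp only [Finset.singleton_val, Multiset.map_singleton,
        Multiset.singleton_inj] at hmap
      exact (mem_Dset.mp hiD) hmap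
    have hc2 : (Dset u v).card = 2 := by
      have := Finset.card_pos.mpr hne
      omega
    obtain ⟨i, j, hij, hDij⟩ := Finset.card_eq_two.mp hc2
    have hi : u i ≠ v i := mem_Dset.mp (by rw [hDij]; simp)
    have hj : u j ≠ v j := mem_Dset.mp (by rw [hDij]; simp)
    have huivj : u i = v j := by
      have h1 : u i ∈ Multiset.map u (Dset u v).val :=
        Multiset.mem_map_of_mem u (Finset.mem_val.mpr (by rw [hDij]; simp))
      rw [map_Dset_eq hwv] at h1
      obtain ⟨m, hmD, hm⟩ := Multiset.mem_map.mp h1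
      have hmij : m = i ∨ m = j := by
        have := Finset.mem_val.mp hmD
        rw [hDij] at this
        simpa using this
      rcases hmij with rfl | rfl
      · exact absurd hm.symm hi
      · exact hm.symm
    have hujvi : u j = v i := by
      have h1 : u j ∈ Multiset.map u (Dset u v).val :=
        Multiset.mem_map_of_mem u (Finset.mem_val.mpr (by rw [hDij]; simp))
      rw [map_Dset_eq hwv] at h1
      obtain ⟨m, hmD, hm⟩ := Multiset.mem_map.mp h1
      have hmij : m = i ∨ m = j := by
        have := Finset.mem_val.mp hmD
        rw [hDij] at this
        simpa using this
      rcases hmij with rfl | rfl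
      · exact hm.symm
      · exact absurd hm.symm hj
    have huij : u i ≠ u j := fun h => hj (h.symm.trans huivj)
    have hvdef : v = u ∘ ⇑(Equiv.swap i j) := by
      funext a
      rcases eq_or_ne a i with rfl | hai
      · simpa using hujvi.symm
      rcases eq_or_ne a j with rfl | haj
      · simpa using huivj.symm
      · have hnot : a ∉ Dset u v := by rw [hDij]; simp [hai, haj]
        have h3 := eq_off_Dset a hnot
        simp [Function.comp_apply, Equiv.swap_apply_of_ne_of_ne hai haj, h3.symm]
    exact M2 hn (Dset u w).card u v w i j le_rfl hij huij hvdef hww huw hvw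
  · -- Hamming distance from u to v at least 3 : move v one step closer to u
    have h3 : 3 ≤ (Dset u v).card := by omega
    obtain ⟨i₀, hi₀⟩ := Finset.card_pos.mp (by omega : 0 < (Dset u v).card)
    have hi₀' : u i₀ ≠ v i₀ := mem_Dset.mp hi₀
    obtain ⟨j₀, hj₀i₀, hvj₀, huj₀⟩ := move hwv hi₀'
    set t := v ∘ ⇑(Equiv.swap i₀ j₀) with htdef
    have hti₀ : t i₀ = v j₀ := by simp [htdef]
    have htj₀ : t j₀ = v i₀ := by simp [htdef]
    have htk : ∀ a, a ≠ i₀ → a ≠ j₀ → t a = v a := fun a h1 h2 => by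
      simp [htdef, Function.comp_apply, Equiv.swap_apply_of_ne_of_ne h1 h2]
    have hvi₀j₀ : v i₀ ≠ v j₀ := fun h => hi₀' (h.trans hvj₀).symm
    have hwt : wordWeight t = wordWeight v := weight_comp_perm v _
    have hDsub : Dset u t ⊆ (Dset u v).erase i₀ := by
      intro a ha
      rw [mem_Dset] at ha
      rcases eq_or_ne a i₀ with rfl | hai
      · exact absurd (hti₀.trans hvj₀).symm ha
      rw [Finset.mem_erase, mem_Dset]
      refine ⟨hai, ?_⟩
      rcases eq_or_ne a j₀ with rfl | haj
      · exact huj₀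
      · rw [← htk a hai haj]; exact ha
    have hDcard : (Dset u t).card ≤ N - 1 := by
      have hh1 := Finset.card_le_card hDsub
      have hh2 := Finset.card_erase_of_mem hi₀
      omega
    have hut : u ≠ t := by
      obtain ⟨m, hm, hmi, hmj⟩ := big_escape h3 i₀ j₀
      intro h
      have h1 := htk m hmi hmj
      rw [← h] at h1
      exact (mem_Dset.mp hm) h1
    have htv : t ≠ v := fun h => hvi₀j₀ ((congrFun h i₀).symm.trans hti₀)
    have hNge : 3 ≤ N := le_trans h3 hN
    by_cases htw : t = w
    · have hwdef : w = v ∘ ⇑(Equiv.swap i₀ j₀) := by rw [← htw]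
      have hrec := M2 hn (Dset v u).card v w u i₀ j₀ le_rfl (Ne.symm hj₀i₀) hvi₀j₀
        hwdef hwv.symm (Ne.symm huv) (Ne.symm huw)
      rw [rot huv huw hvw]
      exact hrec
    · rw [telescope u v w t]
      refine mul_mem ?_ ?_
      · exact ih (N - 1) (by omega) u t w hDcard (hwv.trans hwt.symm) hww hut huw htw
      · rw [rot huv hut (Ne.symm htv)]
        exact M2 hn (Dset v u).card v t u i₀ j₀ le_rfl (Ne.symm hj₀i₀) hvi₀j₀
          htdef hwv.symm (Ne.symm huv) (Ne.symm hut)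

lemma threeCycle_decomp {β : Type*} [DecidableEq β] [Fintype β] {τ : Equiv.Perm β}
    (h : τ.IsThreeCycle) :
    ∃ a b c : β, a ≠ b ∧ a ≠ c ∧ b ≠ c ∧ τ = Equiv.swap a c * Equiv.swap a b := by
  have hs := h.card_support
  obtain ⟨a, ha⟩ : τ.support.Nonempty := by
    rw [← Finset.card_pos, hs]; norm_num
  have hab : a ≠ τ a := (Equiv.Perm.mem_support.mp ha).symm
  have hbsupp : τ a ∈ τ.support := by
    rw [Equiv.Perm.mem_support]
    intro hfix
    exact hab (τ.injective hfix).symm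
  have hbc : τ a ≠ τ (τ a) := (Equiv.Perm.mem_support.mp hbsupp).symm
  have h3 : τ ^ 3 = 1 := by
    rw [← h.orderOf]; exact pow_orderOf_eq_one τ
  have hca : τ (τ (τ a)) = a := by
    have h4 := congrFun (congrArg (fun σ : Equiv.Perm β => (σ : β → β)) h3) a
    simpa [pow_succ, Equiv.Perm.mul_apply] using h4
  have hac : a ≠ τ (τ a) := by
    intro hh
    rw [← hh] at hca
    exact (Equiv.Perm.mem_support.mp ha) (hca.symm ▸ hh ▸ rfl) |>.elim
  have hcsupp : τ (τ a) ∈ τ.support := by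
    rw [Equiv.Perm.mem_support, hca]
    exact hac
  have habc : ({a, τ a, τ (τ a)} : Finset β) ⊆ τ.support := by
    intro x hx
    simp only [Finset.mem_insert, Finset.mem_singleton] at hx
    rcases hx with rfl | rfl | rfl
    exacts [ha, hbsupp, hcsupp]
  have hcard3 : ({a, τ a, τ (τ a)} : Finset β).card = 3 := by
    rw [Finset.card_insert_of_notMem (by simp [hab, hac]),
      Finset.card_insert_of_notMem (by simp [hbc]), Finset.card_singleton]
  have hsupp : τ.support = {a, τ a, τ (τ a)} :=
    (Finset.eq_of_subset_of_card_le habc (by omega)).symm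
  refine ⟨a, τ a, τ (τ a), hab, hac, hbc, ?_⟩
  ext x
  rcases eq_or_ne x a with rfl | hxa
  · rw [Equiv.Perm.mul_apply, Equiv.swap_apply_left,
      Equiv.swap_apply_of_ne_of_ne hab.symm hbc]
  rcases eq_or_ne x (τ a) with rfl | hxb
  · rw [Equiv.Perm.mul_apply, Equiv.swap_apply_right, Equiv.swap_apply_left]
  rcases eq_or_ne x (τ (τ a)) with rfl | hxc
  · rw [Equiv.Perm.mul_apply, Equiv.swap_apply_of_ne_of_ne hac.symm hbc.symm,
      Equiv.swap_apply_right]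
    exact hca
  · have hxsupp : x ∉ τ.support := by
      rw [hsupp]
      simp [hxa, hxb, hxc]
    rw [Equiv.Perm.notMem_support] at hxsupp
    rw [Equiv.Perm.mul_apply, Equiv.swap_apply_of_ne_of_ne hxa hxb,
      Equiv.swap_apply_of_ne_of_ne hxa hxc]
    exact hxsupp


set_option maxHeartbeats 1000000 in
lemma ofSubtype_mem (hn : 3 ≤ n) (c : Multiset A)
    (τ : Equiv.Perm {x : Fin n → A // wordWeight x = c})
    (hτ : Equiv.Perm.sign τ = 1) :
    Equiv.Perm.ofSubtype τ ∈ Subgroup.closure (gens A n) := by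
  have hτ' : τ ∈ alternatingGroup {x : Fin n → A // wordWeight x = c} :=
    Equiv.Perm.mem_alternatingGroup.mpr hτ
  rw [← Equiv.Perm.closure_three_cycles_eq_alternating] at hτ'
  have hmem : Equiv.Perm.ofSubtype τ ∈
      Subgroup.map (Equiv.Perm.ofSubtype)
        (Subgroup.closure {σ : Equiv.Perm {x : Fin n → A // wordWeight x = c} |
          σ.IsThreeCycle}) := ⟨τ, hτ', rfl⟩
  rw [MonoidHom.map_closure] at hmem
  refine Subgroup.closure_le _ |>.mpr ?_ hmem
  rintro σ ⟨τ', hτ'3, rfl⟩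
  obtain ⟨a, b, d, hab, had, hbd, rfl⟩ := threeCycle_decomp hτ'3
  have hrw : Equiv.Perm.ofSubtype (Equiv.swap a d * Equiv.swap a b)
      = Equiv.swap (a : Fin n → A) (d : Fin n → A)
        * Equiv.swap (a : Fin n → A) (b : Fin n → A) := by
    rw [map_mul, Equiv.Perm.ofSubtype_swap_eq, Equiv.Perm.ofSubtype_swap_eq]
  rw [hrw]
  have hM := M3 hn (Dset (a : Fin n → A) (b : Fin n → A)).card
    (a : Fin n → A) (b : Fin n → A) (d : Fin n → A) le_rfl
    (a.2.trans b.2.symm) (a.2.trans d.2.symm)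
    (fun h => hab (Subtype.ext h)) (fun h => had (Subtype.ext h))
    (fun h => hbd (Subtype.ext h))
  exact hM

lemma swap_apply_weight {a b : Fin n → A} (hw : wordWeight a = wordWeight b)
    (t : Fin n → A) : wordWeight (Equiv.swap a b t) = wordWeight t := by
  rcases eq_or_ne t a with rfl | hta
  · rw [Equiv.swap_apply_left]; exact hw.symm
  rcases eq_or_ne t b with rfl | htb
  · rw [Equiv.swap_apply_right]; exact hw
  · rw [Equiv.swap_apply_of_ne_of_ne hta htb]

lemma subtypePerm_swap {a b : Fin n → A} {c : Multiset A}
    (ha : wordWeight a = c) (hb : wordWeight b = c)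
    (h : ∀ x : Fin n → A, wordWeight x = c ↔ wordWeight (Equiv.swap a b x) = c) :
    (Equiv.swap a b).subtypePerm (p := fun x => wordWeight x = c) (fun x => (h x).symm)
      = Equiv.swap (⟨a, ha⟩ : {x : Fin n → A // wordWeight x = c}) ⟨b, hb⟩ := by
  ext x
  rcases eq_or_ne x ⟨a, ha⟩ with rfl | hxa
  · simp [Subtype.ext_iff]
  rcases eq_or_ne x ⟨b, hb⟩ with rfl | hxb
  · simp [Subtype.ext_iff]
  · have h1 : (x : Fin n → A) ≠ a := fun hh => hxa (Subtype.ext hh)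
    have h2 : (x : Fin n → A) ≠ b := fun hh => hxb (Subtype.ext hh)
    simp [Subtype.ext_iff, Equiv.swap_apply_of_ne_of_ne, h1, h2, hxa, hxb]

lemma sign_subtypePerm_swap {a b : Fin n → A} (hab : a ≠ b)
    (hw : wordWeight a = wordWeight b) (c : Multiset A)
    (h : ∀ x : Fin n → A, wordWeight x = c ↔ wordWeight (Equiv.swap a b x) = c) :
    Equiv.Perm.sign ((Equiv.swap a b).subtypePerm (p := fun x => wordWeight x = c) (fun x => (h x).symm))
      = if wordWeight a = c then -1 else 1 := by
  split_ifs with hc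
  · rw [subtypePerm_swap hc (hw.symm.trans hc) h]
    exact Equiv.Perm.sign_swap (fun hh => hab (congrArg Subtype.val hh))
  · have h1 : (Equiv.swap a b).subtypePerm (p := fun x => wordWeight x = c) (fun x => (h x).symm) = 1 := by
      ext x
      have hxa : (x : Fin n → A) ≠ a := fun hh => hc (hh ▸ x.2)
      have hxb : (x : Fin n → A) ≠ b := fun hh => hc (hw.trans (hh ▸ x.2))
      simp [Subtype.ext_iff, Equiv.swap_apply_of_ne_of_ne hxa hxb]
    rw [h1, map_one]

def altSubgroup (A : Type*) [Fintype A] [DecidableEq A] (n : ℕ) :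
    Subgroup (Equiv.Perm (Fin n → A)) where
  carrier := {f | IsAltConservative f}
  one_mem' := by
    constructor
    · intro x; rfl
    · intro c h
      have h1 : (1 : Equiv.Perm (Fin n → A)).subtypePerm (p := fun x => wordWeight x = c) (fun x => (h x).symm) = 1 := rfl
      rw [h1, map_one]
  mul_mem' := by
    rintro f g ⟨hf1, hf2⟩ ⟨hg1, hg2⟩
    constructor
    · intro x
      calc wordWeight ((f * g) x) = wordWeight (g x) := hf1 _
        _ = wordWeight x := hg1 _
    · intro c h
      have hgh : ∀ x : Fin n → A, wordWeight x = c ↔ wordWeight (g x) = c :=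
        fun x => by rw [hg1]
      have hfh : ∀ x : Fin n → A, wordWeight x = c ↔ wordWeight (f x) = c :=
        fun x => by rw [hf1]
      have heq : (f * g).subtypePerm (p := fun x => wordWeight x = c) (fun x => (h x).symm) = f.subtypePerm (p := fun x => wordWeight x = c) (fun x => (hfh x).symm) * g.subtypePerm (p := fun x => wordWeight x = c) (fun x => (hgh x).symm) := rfl
      rw [heq, map_mul, hf2 c hfh, hg2 c hgh, mul_one]
  inv_mem' := by
    rintro f ⟨hf1, hf2⟩
    constructor
    · intro x
      have h1 := hf1 (f⁻¹ x)
      rw [show f (f⁻¹ x) = x from Equiv.apply_symm_apply f x] at h1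
      exact h1.symm
    · intro c h
      have hfh : ∀ x : Fin n → A, wordWeight x = c ↔ wordWeight (f x) = c :=
        fun x => by rw [hf1]
      have heq : f⁻¹.subtypePerm (p := fun x => wordWeight x = c) (fun x => (h x).symm) = (f.subtypePerm (p := fun x => wordWeight x = c) (fun x => (hfh x).symm))⁻¹ := rfl
      rw [heq, map_inv, hf2 c hfh, inv_one]

lemma mem_altSubgroup {f : Equiv.Perm (Fin n → A)} :
    f ∈ altSubgroup A n ↔ IsAltConservative f := Iff.rfl

lemma gens_subset_alt : gens A n ⊆ (altSubgroup A n : Set (Equiv.Perm (Fin n → A))) := by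
  rintro σ ⟨S, x, y, z, hS, hxy, hxz, hyz, hoy, hoz, hmy, hmz, rfl⟩
  have hwy : wordWeight x = wordWeight y := weight_eq_of_eq_off hoy hmy
  have hwz : wordWeight x = wordWeight z := weight_eq_of_eq_off hoz hmz
  constructor
  · intro t
    calc wordWeight ((Equiv.swap x z * Equiv.swap x y) t)
        = wordWeight (Equiv.swap x y t) := swap_apply_weight hwz _
      _ = wordWeight t := swap_apply_weight hwy _
  · intro c h
    have h1 : ∀ t : Fin n → A, wordWeight t = c ↔ wordWeight (Equiv.swap x y t) = c :=
      fun t => by rw [swap_apply_weight hwy]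
    have h2 : ∀ t : Fin n → A, wordWeight t = c ↔ wordWeight (Equiv.swap x z t) = c :=
      fun t => by rw [swap_apply_weight hwz]
    have heq : (Equiv.swap x z * Equiv.swap x y).subtypePerm (p := fun x => wordWeight x = c) (fun x => (h x).symm)
        = (Equiv.swap x z).subtypePerm (p := fun x => wordWeight x = c) (fun x => (h2 x).symm) * (Equiv.swap x y).subtypePerm (p := fun x => wordWeight x = c) (fun x => (h1 x).symm) := rfl
    rw [heq, map_mul, sign_subtypePerm_swap hxz hwz c h2,
      sign_subtypePerm_swap hxy hwy c h1]
    split_ifs <;> norm_num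

lemma conservative_mem (hn : 3 ≤ n)
    (g : Equiv.Perm (Fin n → A)) (hg : IsAltConservative g) :
    g ∈ Subgroup.closure (gens A n) := by
  suffices Hs : ∀ s : Finset (Multiset A), ∀ g : Equiv.Perm (Fin n → A),
      IsAltConservative g → (∀ x, wordWeight x ∉ s → g x = x) →
      g ∈ Subgroup.closure (gens A n) by
    exact Hs (Finset.image wordWeight Finset.univ) g hg
      (fun x hx => absurd (Finset.mem_image_of_mem wordWeight (Finset.mem_univ x)) hx)
  intro s
  induction s using Finset.induction_on with
  | empty =>
    intro g hg hfix
    have h1 : g = 1 := Equiv.ext fun x => hfix x (by simp)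
    rw [h1]; exact one_mem _
  | @insert c s hcs ih =>
    intro g hg hfix
    have hc : ∀ x : Fin n → A, wordWeight x = c ↔ wordWeight (g x) = c :=
      fun x => by rw [hg.1]
    set σ := Equiv.Perm.ofSubtype (g.subtypePerm (p := fun x => wordWeight x = c) (fun x => (hc x).symm)) with hσdef
    have hσG : σ ∈ Subgroup.closure (gens A n) :=
      ofSubtype_mem hn c _ (hg.2 c hc)
    have hσalt : IsAltConservative σ :=
      mem_altSubgroup.mp ((Subgroup.closure_le (altSubgroup A n)).mpr gens_subset_alt hσG)
    have hkey : IsAltConservative (σ⁻¹ * g) :=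
      mem_altSubgroup.mp ((altSubgroup A n).mul_mem
        ((altSubgroup A n).inv_mem (mem_altSubgroup.mpr hσalt)) (mem_altSubgroup.mpr hg))
    have happσ : ∀ x : Fin n → A, wordWeight x = c → σ x = g x := by
      intro x hx
      rw [hσdef, Equiv.Perm.ofSubtype_apply_of_mem
        (p := fun y : Fin n → A => wordWeight y = c) (g.subtypePerm (p := fun x => wordWeight x = c) (fun x => (hc x).symm)) hx]
      rfl
    have hfixσ : ∀ x : Fin n → A, ¬ wordWeight x = c → σ x = x := fun x hx =>
      Equiv.Perm.ofSubtype_apply_of_not_mem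
        (p := fun y : Fin n → A => wordWeight y = c) (g.subtypePerm (p := fun x => wordWeight x = c) (fun x => (hc x).symm)) hx
    have hfix' : ∀ x, wordWeight x ∉ s → (σ⁻¹ * g) x = x := by
      intro x hx
      rw [Equiv.Perm.mul_apply]
      by_cases hxc : wordWeight x = c
      · rw [← happσ x hxc]
        exact Equiv.symm_apply_apply σ x
      · have hgx : g x = x := hfix x (by simp [Finset.mem_insert, hxc, hx])
        rw [hgx]
        exact (Equiv.Perm.inv_eq_iff_eq).mpr (hfixσ x hxc).symm
    have hdecomp : g = σ * (σ⁻¹ * g) := by group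
    rw [hdecomp]
    exact mul_mem hσG (ih (σ⁻¹ * g) hkey hfix')

end AltConsProof

/-- **Local 3-cycles generate the alternating conservative group.**
Let `A` be a finite type and `n ≥ 3`.  A permutation of `Fin n → A` is alternating
conservative if and only if it lies in the subgroup of `Perm (Fin n → A)` generated by
the 3-cycles `(x y z)` (i.e. `x ↦ y ↦ z ↦ x`) of triples of pairwise distinct words
that agree outside some 3-element subset `S` of the coordinates and whose restrictions
to `S` have equal multisets of entries. -/
theorem altConservative_generated_by_local_threeCycles
    {A : Type*} [Fintype A] [DecidableEq A] (n : ℕ) (hn : 3 ≤ n)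
    (g : Equiv.Perm (Fin n → A)) :
    g ∈ Subgroup.closure
        {σ : Equiv.Perm (Fin n → A) |
          ∃ (S : Finset (Fin n)) (x y z : Fin n → A),
            S.card = 3 ∧ x ≠ y ∧ x ≠ z ∧ y ≠ z ∧
            (∀ i ∉ S, x i = y i) ∧ (∀ i ∉ S, x i = z i) ∧
            Multiset.map x S.val = Multiset.map y S.val ∧
            Multiset.map x S.val = Multiset.map z S.val ∧
            σ = Equiv.swap x z * Equiv.swap x y} ↔
      IsAltConservative g := by
  constructor
  · intro hg
    exact AltConsProof.mem_altSubgroup.mp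
      ((Subgroup.closure_le (AltConsProof.altSubgroup A n)).mpr
        AltConsProof.gens_subset_alt hg)
  · intro hg
    exact AltConsProof.conservative_mem hn g hg
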